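/- Let V ∈ ℝ^{d×k} and V_⊥ ∈ ℝ^{d×(d−k)} be matrices such that the concatenation [V | V_⊥] is a d×d orthogonal matrix, let D ∈ ℝ^{n×d}, and set ε* = DV ∈ ℝ^{n×k}. Then for every ε ∈ ℝ^{n×k}: ‖D − εVᵀ‖_F² ≤ 2 Σ_i σ_i(D V_⊥)² + 2‖ε − ε*‖_F², where σ_i(D V_⊥) are the singular values of D V_⊥. In particular, ‖(ε − ε*)Vᵀ‖_F = ‖ε − ε*‖_F since V has orthonormal columns. -/

import Mathlib

open Matrix Finset

/-- Squared Frobenius norm of a real matrix: `‖M‖_F² = ∑_{i,j} M_{ij}²`. -/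
noncomputable def frobSq {m n : Type*} [Fintype m] [Fintype n] (M : Matrix m n ℝ) : ℝ :=
  ∑ i, ∑ j, (M i j) ^ 2

/-- Frobenius norm of a real matrix: `‖M‖_F = sqrt (∑_{i,j} M_{ij}²)`. -/
noncomputable def frobNorm {m n : Type*} [Fintype m] [Fintype n] (M : Matrix m n ℝ) : ℝ :=
  Real.sqrt (frobSq M)

/-- The singular values of a real matrix `M`: the nonnegative square roots of the
eigenvalues of `MᵀM` (indexed by the column index type). -/
noncomputable def singularValues {m n : Type*} [Fintype m] [Fintype n] [DecidableEq n]
    (M : Matrix m n ℝ) : n → ℝ :=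
  fun i => Real.sqrt ((Matrix.isHermitian_conjTranspose_mul_self M).eigenvalues i)

lemma frobSq_eq_trace {m n : Type*} [Fintype m] [Fintype n] (M : Matrix m n ℝ) :
    frobSq M = (Mᵀ * M).trace := by
  simp only [frobSq, Matrix.trace, Matrix.diag, Matrix.mul_apply, Matrix.transpose_apply]
  rw [Finset.sum_comm]
  simp [sq]

lemma frobSq_nonneg {m n : Type*} [Fintype m] [Fintype n] (M : Matrix m n ℝ) :
    0 ≤ frobSq M :=
  Finset.sum_nonneg fun _ _ => Finset.sum_nonneg fun _ _ => sq_nonneg _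

/-- Right-multiplication by `Bᵀ` with `BᵀB = 1` preserves the squared Frobenius norm. -/
lemma frobSq_mul_transpose_orth {m n p : Type*} [Fintype m] [Fintype n] [Fintype p]
    [DecidableEq n] (M : Matrix m n ℝ) (B : Matrix p n ℝ) (hB : Bᵀ * B = 1) :
    frobSq (M * Bᵀ) = frobSq M := by
  rw [frobSq_eq_trace, frobSq_eq_trace, Matrix.transpose_mul, Matrix.transpose_transpose,
    Matrix.mul_assoc, show Mᵀ * (M * Bᵀ) = (Mᵀ * M) * Bᵀ from (Matrix.mul_assoc _ _ _).symm,
    Matrix.trace_mul_comm, Matrix.mul_assoc, hB, Matrix.mul_one]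

lemma trace_eq_sum_eigenvalues {m : Type*} [Fintype m] [DecidableEq m]
    (A : Matrix m m ℝ) (hA : A.IsHermitian) : A.trace = ∑ i, hA.eigenvalues i := by
  have := hA.trace_eq_sum_eigenvalues
  simpa using this

lemma sum_singularValues_sq {m n : Type*} [Fintype m] [Fintype n] [DecidableEq n]
    (M : Matrix m n ℝ) : ∑ i, singularValues M i ^ 2 = frobSq M := by
  have h := Matrix.isHermitian_conjTranspose_mul_self M
  have hMt : Mᴴ = Mᵀ := Matrix.conjTranspose_eq_transpose_of_trivial M
  have : frobSq M = (Mᴴ * M).trace := by rw [hMt, frobSq_eq_trace]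
  rw [this, trace_eq_sum_eigenvalues _ h]
  refine Finset.sum_congr rfl fun i _ => ?_
  rw [singularValues, Real.sq_sqrt (Matrix.eigenvalues_conjTranspose_mul_self_nonneg M i)]

lemma frobSq_add_le {m n : Type*} [Fintype m] [Fintype n] (A B : Matrix m n ℝ) :
    frobSq (A + B) ≤ 2 * frobSq A + 2 * frobSq B := by
  simp only [frobSq, Finset.mul_sum, ← Finset.sum_add_distrib]
  refine Finset.sum_le_sum fun i _ => Finset.sum_le_sum fun j _ => ?_
  simp only [Matrix.add_apply]
  nlinarith [sq_nonneg (A i j - B i j)]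

/-- **Deterministic core of the bound (2) in Theorem 2.** Let `[V | V⊥]` be a `d × d`
orthogonal matrix, `D ∈ ℝ^{n×d}` and `ε* = DV`. Then for every `ε ∈ ℝ^{n×k}`,
`‖D − εVᵀ‖_F² ≤ 2 ∑ᵢ σᵢ(D V⊥)² + 2‖ε − ε*‖_F²`, where `σᵢ(D V⊥)` are the singular
values of `D V⊥`. In particular `‖(ε − ε*)Vᵀ‖_F = ‖ε − ε*‖_F` since `V` has orthonormal
columns. -/
theorem subspace_error_decomposition (n d k : ℕ)
    (V : Matrix (Fin d) (Fin k) ℝ) (Vperp : Matrix (Fin d) (Fin (d - k)) ℝ)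
    (horth : (fromCols V Vperp)ᵀ * fromCols V Vperp = 1)
    (horth' : fromCols V Vperp * (fromCols V Vperp)ᵀ = 1)
    (D : Matrix (Fin n) (Fin d) ℝ) :
    (∀ ε : Matrix (Fin n) (Fin k) ℝ,
      frobSq (D - ε * Vᵀ) ≤
        2 * (∑ i, singularValues (D * Vperp) i ^ 2) + 2 * frobSq (ε - D * V)) ∧
    (∀ ε : Matrix (Fin n) (Fin k) ℝ,
      frobNorm ((ε - D * V) * Vᵀ) = frobNorm (ε - D * V)) := by
  -- extract orthonormality facts
  have hrows : (fromCols V Vperp)ᵀ = fromRows Vᵀ Vperpᵀ := transpose_fromCols V Vperp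
  have hfull : V * Vᵀ + Vperp * Vperpᵀ = 1 := by
    rw [hrows] at horth'
    rwa [fromCols_mul_fromRows] at horth'
  have hblocks : fromBlocks (Vᵀ * V) (Vᵀ * Vperp) (Vperpᵀ * V) (Vperpᵀ * Vperp) = 1 := by
    rw [hrows] at horth
    rwa [fromRows_mul_fromCols] at horth
  have hV : Vᵀ * V = 1 := by
    ext i j
    have := congrFun (congrFun hblocks (Sum.inl i)) (Sum.inl j)
    simpa [Matrix.one_apply, Matrix.fromBlocks] using this
  have hVp : Vperpᵀ * Vperp = 1 := by
    ext i j
    have := congrFun (congrFun hblocks (Sum.inr i)) (Sum.inr j)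
    simpa [Matrix.one_apply, Matrix.fromBlocks] using this
  have hsubcomm : ∀ (A B : Matrix (Fin n) (Fin k) ℝ), frobSq (A - B) = frobSq (B - A) := by
    intro A B
    unfold frobSq
    refine Finset.sum_congr rfl fun i _ => Finset.sum_congr rfl fun j _ => ?_
    rw [← neg_sub, Matrix.neg_apply, neg_sq]
  constructor
  · intro ε
    have hD : D = D * V * Vᵀ + D * Vperp * Vperpᵀ := by
      rw [Matrix.mul_assoc, Matrix.mul_assoc, ← Matrix.mul_add, hfull, Matrix.mul_one]
    have hdecomp : D - ε * Vᵀ = (D * V - ε) * Vᵀ + D * Vperp * Vperpᵀ := by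
      conv_lhs => rw [hD]
      rw [Matrix.sub_mul]
      abel
    have hle := frobSq_add_le ((D * V - ε) * Vᵀ) (D * Vperp * Vperpᵀ)
    rw [frobSq_mul_transpose_orth _ V hV, frobSq_mul_transpose_orth _ Vperp hVp] at hle
    rw [hdecomp, sum_singularValues_sq, hsubcomm ε (D * V)]
    linarith
  · intro ε
    unfold frobNorm
    rw [frobSq_mul_transpose_orth _ V hV]
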